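/- Finitely many degenerate step lengths: consider an abstract discrete inverse problem satisfying the boundary/interior identity fᵀ(Λ_{p₁}−Λ_{p₂})g = b(S_{p₂}g, S_{p₁}f)ᵀ(p₁−p₂) on an open convex R ⊂ ℂ^m, where all entries of S_p are rational functions of p. Let p ∈ R, δp ∈ ℂ^m with δp ≠ 0, and suppose the Jacobian of p ↦ Λ_p (represented by the product-of-solutions matrix W(p,p)ᵀ) is injective at p. Then there are at most finitely many real t with p + tδp ∈ R for which either (i) the Jacobian at p + tδp fails to be injective, or (ii) Λ_{p+tδp} = Λ_p. -/

import Mathlib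

open Matrix

/-- The product-of-solutions matrix `W(p₁,p₂) ∈ ℂ^{m × n²}`, with columns
`W(p₁,p₂)(:, (i,j)) = b(S_{p₁}(:,i), S_{p₂}(:,j))`. -/
def Wmat {m n ℓ : ℕ} (S : (Fin m → ℂ) → Matrix (Fin ℓ) (Fin n) ℂ)
    (b : (Fin ℓ → ℂ) → (Fin ℓ → ℂ) → (Fin m → ℂ))
    (p₁ p₂ : Fin m → ℂ) : Matrix (Fin m) (Fin n × Fin n) ℂ :=
  fun k ij => b (fun a => S p₁ a ij.1) (fun a => S p₂ a ij.2) k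

open Polynomial

set_option linter.unusedVariables false

lemma aeval_line_eval {m : ℕ} (p δp : Fin m → ℂ) (P : MvPolynomial (Fin m) ℂ) (t : ℂ) :
    (MvPolynomial.aeval (fun k => Polynomial.C (p k) + Polynomial.C (δp k) * Polynomial.X) P).eval t
      = MvPolynomial.eval (p + t • δp) P := by
  induction P using MvPolynomial.induction_on with
  | C a => simp
  | add f g hf hg => simp [hf, hg]
  | mul_X f i hf =>
    simp only [_root_.map_mul, MvPolynomial.aeval_X, Polynomial.eval_mul, Polynomial.eval_add,
      Polynomial.eval_C, Polynomial.eval_X, hf, MvPolynomial.eval_mul, MvPolynomial.eval_X,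
      Pi.add_apply, Pi.smul_apply, smul_eq_mul]
    ring

lemma bilin_expand {m ℓ : ℕ} (b : (Fin ℓ → ℂ) → (Fin ℓ → ℂ) → (Fin m → ℂ))
    (hb1 : ∀ y, IsLinearMap ℂ fun x => b x y)
    (hb2 : ∀ x, IsLinearMap ℂ fun y => b x y) (x y : Fin ℓ → ℂ) :
    b x y = ∑ a : Fin ℓ, ∑ c : Fin ℓ, (x a * y c) • b (Pi.single a 1) (Pi.single c 1) := by
  have hx : x = ∑ a : Fin ℓ, x a • (Pi.single a 1 : Fin ℓ → ℂ) := by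
    funext i; simp [Pi.single_apply]
  have hy : y = ∑ c : Fin ℓ, y c • (Pi.single c 1 : Fin ℓ → ℂ) := by
    funext i; simp [Pi.single_apply]
  have step1 : b x y = ∑ a : Fin ℓ, x a • b (Pi.single a 1) y := by
    conv_lhs => rw [hx]
    let L : (Fin ℓ → ℂ) →ₗ[ℂ] (Fin m → ℂ) := IsLinearMap.mk' _ (hb1 y)
    have : ∀ z, b z y = L z := fun z => rfl
    simp_rw [this, map_sum, _root_.map_smul]
  rw [step1]
  refine Finset.sum_congr rfl fun a _ => ?_
  have step2 : b (Pi.single a 1) y = ∑ c : Fin ℓ, y c • b (Pi.single a 1) (Pi.single c 1) := by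
    conv_lhs => rw [hy]
    let L : (Fin ℓ → ℂ) →ₗ[ℂ] (Fin m → ℂ) := IsLinearMap.mk' _ (hb2 (Pi.single a 1))
    have : ∀ z, b (Pi.single a 1) z = L z := fun z => rfl
    simp_rw [this, map_sum, _root_.map_smul]
  rw [step2, Finset.smul_sum]
  exact Finset.sum_congr rfl fun c _ => by rw [smul_smul]

lemma exists_minor {m : ℕ} {ι : Type*} [Fintype ι] [DecidableEq ι]
    (A : Matrix (Fin m) ι ℂ)
    (h : Function.Injective fun x : Fin m → ℂ => Aᵀ *ᵥ x) :
    ∃ s : Fin m → ι, (Matrix.of fun k l => A k (s l)).det ≠ 0 := by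
  classical
  have hli : LinearIndependent ℂ (fun k : Fin m => A k) := by
    rw [Fintype.linearIndependent_iff]
    intro g hg
    have h0 : Aᵀ *ᵥ g = Aᵀ *ᵥ 0 := by
      rw [Matrix.mulVec_zero]
      funext j
      have := congrFun hg j
      simpa [Matrix.mulVec, dotProduct, mul_comm] using this
    have := h h0
    intro i; rw [this]; rfl
  have hrank : A.rank = m := by
    have := hli.rank_matrix (M := A)
    simpa using this
  have hspan : Submodule.span ℂ (Set.range Aᵀ) = ⊤ := by
    apply Submodule.eq_top_of_finrank_eq
    change Module.finrank ℂ (Submodule.span ℂ (Set.range A.col)) = _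
    rw [← Matrix.rank_eq_finrank_span_cols, hrank, Module.finrank_pi]
    simp
  obtain ⟨t, hts, hspan', htli⟩ := exists_linearIndependent ℂ (Set.range Aᵀ)
  rw [hspan] at hspan'
  have htfin : t.Finite := (Set.finite_range Aᵀ).subset hts
  haveI := htfin.fintype
  let B : Module.Basis t ℂ (Fin m → ℂ) := Module.Basis.mk htli (by rw [Subtype.range_coe]; exact hspan'.ge)
  have hcard : Fintype.card t = m := by
    have := Module.finrank_eq_card_basis B
    rw [Module.finrank_pi] at this
    simpa using this.symm
  let e : Fin m ≃ t := (Fintype.equivFinOfCardEq hcard).symm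
  have hsel : ∀ v : t, ∃ ij : ι, Aᵀ ij = (v : Fin m → ℂ) := fun v => hts v.2
  choose sel hselspec using hsel
  refine ⟨fun l => sel (e l), ?_⟩
  have hbasis : LinearIndependent ℂ (fun l : Fin m => (e l : Fin m → ℂ)) ∧
      Submodule.span ℂ (Set.range fun l : Fin m => (e l : Fin m → ℂ)) = ⊤ := by
    constructor
    · exact htli.comp e e.injective
    · rw [← hspan']
      congr 1
      ext v
      constructor
      · rintro ⟨l, rfl⟩; exact (e l).2
      · intro hv; exact ⟨e.symm ⟨v, hv⟩, by simp⟩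
  have := (Module.Basis.is_basis_iff_det (Pi.basisFun ℂ (Fin m))).mp hbasis
  rw [Module.Basis.det_apply] at this
  have hdet : ((Pi.basisFun ℂ (Fin m)).toMatrix fun l => (e l : Fin m → ℂ)).det ≠ 0 :=
    this.ne_zero
  convert hdet using 2
  ext k l
  simp [Module.Basis.toMatrix_apply, ← hselspec (e l), Matrix.transpose_apply]

/-- **finitely many degenerate step lengths.** For an abstract discrete
inverse problem satisfying the boundary/interior identity on an open convex `R`,
with all entries of `S_p` rational functions of `p`: if the Jacobian `W(p,p)ᵀ` is
injective at some `p ∈ R` and `δp ≠ 0`, then there are at most finitely many real `t`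
with `p + tδp ∈ R` such that either the Jacobian at `p + tδp` is not injective or
`Λ_{p+tδp} = Λ_p`. -/
theorem finitely_many_degenerate_steps {m n ℓ : ℕ}
    (R : Set (Fin m → ℂ)) (hRopen : IsOpen R) (hRconv : Convex ℝ R)
    (Λ : (Fin m → ℂ) → Matrix (Fin n) (Fin n) ℂ)
    (S : (Fin m → ℂ) → Matrix (Fin ℓ) (Fin n) ℂ)
    (b : (Fin ℓ → ℂ) → (Fin ℓ → ℂ) → (Fin m → ℂ))
    (hb1 : ∀ y, IsLinearMap ℂ fun x => b x y)
    (hb2 : ∀ x, IsLinearMap ℂ fun y => b x y)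
    (hid : ∀ (f g : Fin n → ℂ), ∀ p₁ ∈ R, ∀ p₂ ∈ R,
      f ⬝ᵥ ((Λ p₁ - Λ p₂) *ᵥ g) = b (S p₂ *ᵥ g) (S p₁ *ᵥ f) ⬝ᵥ (p₁ - p₂))
    (hrat : ∀ (i : Fin ℓ) (j : Fin n), ∃ P Q : MvPolynomial (Fin m) ℂ,
      ∀ p ∈ R, MvPolynomial.eval p Q ≠ 0 ∧
        S p i j = MvPolynomial.eval p P / MvPolynomial.eval p Q)
    (p : Fin m → ℂ) (hp : p ∈ R) (δp : Fin m → ℂ) (hδp : δp ≠ 0)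
    (hinj : Function.Injective fun x : Fin m → ℂ => (Wmat S b p p)ᵀ *ᵥ x) :
    {t : ℝ | p + (t : ℂ) • δp ∈ R ∧
        (¬ Function.Injective (fun x : Fin m → ℂ =>
            (Wmat S b (p + (t : ℂ) • δp) (p + (t : ℂ) • δp))ᵀ *ᵥ x) ∨
          Λ (p + (t : ℂ) • δp) = Λ p)}.Finite := by
  classical
  choose P Q hPQ using hrat
  set q : ℂ → (Fin m → ℂ) := fun z => p + z • δp with hq
  have hq0 : q 0 = p := by simp [hq]
  -- common denominator
  set D : MvPolynomial (Fin m) ℂ := ∏ x : Fin ℓ × Fin n, Q x.1 x.2 with hDdef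
  have hDne : ∀ r ∈ R, MvPolynomial.eval r D ≠ 0 := by
    intro r hr
    rw [hDdef, map_prod]
    exact Finset.prod_ne_zero_iff.mpr fun x _ => (hPQ x.1 x.2 r hr).1
  set N : Fin ℓ → Fin n → MvPolynomial (Fin m) ℂ :=
    fun a i => P a i * ∏ x ∈ Finset.univ.erase (a, i), Q x.1 x.2 with hNdef
  have hN : ∀ r ∈ R, ∀ a i, MvPolynomial.eval r (N a i)
      = S r a i * MvPolynomial.eval r D := by
    intro r hr a i
    have hQ := (hPQ a i r hr).1
    have hS := (hPQ a i r hr).2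
    have hDsplit : MvPolynomial.eval r D = MvPolynomial.eval r (Q a i) *
        ∏ x ∈ Finset.univ.erase (a, i), MvPolynomial.eval r (Q x.1 x.2) := by
      rw [hDdef, map_prod, ← Finset.mul_prod_erase Finset.univ _ (Finset.mem_univ (a, i))]
    rw [hNdef]
    simp only [_root_.map_mul, map_prod]
    rw [hS, hDsplit]
    field_simp
  -- restrict polynomials to the line
  set ψ : MvPolynomial (Fin m) ℂ →ₐ[ℂ] Polynomial ℂ :=
    MvPolynomial.aeval (fun k => Polynomial.C (p k) + Polynomial.C (δp k) * Polynomial.X) with hψdef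
  have hψ : ∀ (Pm : MvPolynomial (Fin m) ℂ) (z : ℂ),
      (ψ Pm).eval z = MvPolynomial.eval (q z) Pm := fun Pm z => aeval_line_eval p δp Pm z
  set d : Polynomial ℂ := ψ D with hddef
  set nn : Fin ℓ → Fin n → Polynomial ℂ := fun a i => ψ (N a i) with hnndef
  have hd : ∀ z : ℂ, q z ∈ R → d.eval z ≠ 0 := by
    intro z hz; rw [hddef, hψ]; exact hDne _ hz
  have hnn : ∀ z : ℂ, q z ∈ R → ∀ a i, (nn a i).eval z = S (q z) a i * d.eval z := by
    intro z hz a i; rw [hnndef, hddef]; simp only []; rw [hψ, hψ]; exact hN _ hz a i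
  -- bilinear coefficients
  set β : Fin m → Fin ℓ → Fin ℓ → ℂ := fun k a c => b (Pi.single a 1) (Pi.single c 1) k with hβdef
  have hW : ∀ (r₁ r₂ : Fin m → ℂ) (k : Fin m) (ij : Fin n × Fin n),
      Wmat S b r₁ r₂ k ij = ∑ a : Fin ℓ, ∑ c : Fin ℓ, S r₁ a ij.1 * S r₂ c ij.2 * β k a c := by
    intro r₁ r₂ k ij
    show b (fun a => S r₁ a ij.1) (fun a => S r₂ a ij.2) k = _
    rw [bilin_expand b hb1 hb2]
    simp [Finset.sum_apply, hβdef, mul_assoc]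
  -- Part A: the minor polynomial
  obtain ⟨s, hs⟩ := exists_minor (Wmat S b p p) hinj
  set Msub : ℂ → Matrix (Fin m) (Fin m) ℂ :=
    fun z => Matrix.of fun k l => Wmat S b (q z) (q z) k (s l) with hMsubdef
  set Gpoly : Matrix (Fin m) (Fin m) (Polynomial ℂ) := Matrix.of fun k l =>
    ∑ a : Fin ℓ, ∑ c : Fin ℓ, Polynomial.C (β k a c) * (nn a (s l).1 * nn c (s l).2) with hGdef
  have hG : ∀ z : ℂ, q z ∈ R → ∀ k l, (Gpoly k l).eval z = Msub z k l * (d.eval z) ^ 2 := by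
    intro z hz k l
    rw [hGdef, hMsubdef]
    simp only [Matrix.of_apply, Polynomial.eval_finset_sum, Polynomial.eval_mul,
      Polynomial.eval_C, hnn z hz]
    rw [hW (q z) (q z) k (s l), Finset.sum_mul]
    refine Finset.sum_congr rfl fun a _ => ?_
    rw [Finset.sum_mul]
    refine Finset.sum_congr rfl fun c _ => ?_
    ring
  set F₁ : Polynomial ℂ := Gpoly.det with hF₁def
  have hF₁ : ∀ z : ℂ, q z ∈ R → F₁.eval z = (Msub z).det * ((d.eval z) ^ 2) ^ m := by
    intro z hz
    have h1 : F₁.eval z = (Gpoly.map (Polynomial.eval z)).det := by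
      rw [hF₁def]
      exact (Polynomial.evalRingHom z).map_det Gpoly
    have h2 : Gpoly.map (Polynomial.eval z) = ((d.eval z) ^ 2) • Msub z := by
      ext k l
      simp only [Matrix.map_apply, Matrix.smul_apply, smul_eq_mul]
      rw [hG z hz k l]; ring
    rw [h1, h2, Matrix.det_smul]
    simp [mul_comm]
  have hqmem0 : q 0 ∈ R := by rw [hq0]; exact hp
  have hF₁0 : F₁.eval 0 ≠ 0 := by
    rw [hF₁ 0 hqmem0]
    refine mul_ne_zero ?_ (pow_ne_zero _ (pow_ne_zero _ (hd 0 hqmem0)))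
    have : Msub 0 = Matrix.of fun k l => Wmat S b p p k (s l) := by
      rw [hMsubdef]; simp only [hq0]
    rw [this]; exact hs
  -- Part B: nonvanishing of W(p,p)ᵀ δp, and the polynomial F₂
  have hWδ : (Wmat S b p p)ᵀ *ᵥ δp ≠ 0 := by
    intro h0
    exact hδp (hinj (show (Wmat S b p p)ᵀ *ᵥ δp = (Wmat S b p p)ᵀ *ᵥ 0 by
      rw [h0, Matrix.mulVec_zero]))
  obtain ⟨ij₀, hij₀⟩ : ∃ ij, ((Wmat S b p p)ᵀ *ᵥ δp) ij ≠ 0 := by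
    by_contra hc
    push_neg at hc
    exact hWδ (funext hc)
  have hentry : ∀ (r₁ r₂ : Fin m → ℂ) (ij : Fin n × Fin n),
      ((Wmat S b r₁ r₂)ᵀ *ᵥ δp) ij = ∑ k : Fin m, Wmat S b r₁ r₂ k ij * δp k := by
    intro r₁ r₂ ij
    simp [Matrix.mulVec, dotProduct, Matrix.transpose_apply]
  set Cc : Fin ℓ → ℂ := fun c => ∑ k : Fin m, (∑ a : Fin ℓ, S p a ij₀.1 * β k a c) * δp k
    with hCcdef
  set F₂ : Polynomial ℂ := ∑ c : Fin ℓ, Polynomial.C (Cc c) * nn c ij₀.2 with hF₂def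
  have hF₂eval : ∀ z : ℂ, q z ∈ R →
      F₂.eval z = (∑ k : Fin m, Wmat S b p (q z) k ij₀ * δp k) * d.eval z := by
    intro z hz
    rw [hF₂def]
    simp only [Polynomial.eval_finset_sum, Polynomial.eval_mul, Polynomial.eval_C, hnn z hz,
      hCcdef]
    simp only [hW p (q z), Finset.sum_mul]
    rw [Finset.sum_comm]
    refine Finset.sum_congr rfl fun k _ => ?_
    rw [Finset.sum_comm]
    refine Finset.sum_congr rfl fun c _ => ?_
    exact Finset.sum_congr rfl fun a _ => by ring
  have hF₂0 : F₂.eval 0 ≠ 0 := by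
    rw [hF₂eval 0 hqmem0]
    refine mul_ne_zero ?_ (hd 0 hqmem0)
    rw [hq0, ← hentry p p ij₀]
    exact hij₀
  have hF₂zero : ∀ t : ℂ, t ≠ 0 → q t ∈ R → Λ (q t) = Λ p → F₂.eval t = 0 := by
    intro t ht hqt hΛ
    have hkey := hid (Pi.single ij₀.2 1) (Pi.single ij₀.1 1) (q t) hqt p hp
    rw [hΛ, sub_self, Matrix.zero_mulVec, dotProduct_zero] at hkey
    have hline : q t - p = (t : ℂ) • δp := by rw [hq]; simp
    rw [hline] at hkey
    have hcols : b (S p *ᵥ Pi.single ij₀.1 1) (S (q t) *ᵥ Pi.single ij₀.2 1)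
        = fun k => Wmat S b p (q t) k ij₀ := by
      funext k
      show b (S p *ᵥ Pi.single ij₀.1 1) (S (q t) *ᵥ Pi.single ij₀.2 1) k
        = b (fun a => S p a ij₀.1) (fun a => S (q t) a ij₀.2) k
      congr 1 <;> · funext a; simp [Matrix.mulVec_single]
    rw [hcols] at hkey
    have hdot : (fun k => Wmat S b p (q t) k ij₀) ⬝ᵥ ((t : ℂ) • δp)
        = (t : ℂ) * ∑ k : Fin m, Wmat S b p (q t) k ij₀ * δp k := by
      simp [dotProduct, Finset.mul_sum]
      exact Finset.sum_congr rfl fun k _ => by ring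
    rw [hdot] at hkey
    have hsum : ∑ k : Fin m, Wmat S b p (q t) k ij₀ * δp k = 0 :=
      by
        rcases mul_eq_zero.mp hkey.symm with h | h
        · exact absurd h ht
        · exact h
    rw [hF₂eval t hqt, hsum, zero_mul]
  -- Part C: combine
  set F : Polynomial ℂ := F₁ * F₂ with hFdef
  have hF : F ≠ 0 := by
    intro h0
    have : F.eval 0 = 0 := by rw [h0]; simp
    rw [hFdef, Polynomial.eval_mul] at this
    rcases mul_eq_zero.mp this with h | h
    · exact hF₁0 h
    · exact hF₂0 h
  have hsubset : {t : ℝ | p + (t : ℂ) • δp ∈ R ∧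
        (¬ Function.Injective (fun x : Fin m → ℂ =>
            (Wmat S b (p + (t : ℂ) • δp) (p + (t : ℂ) • δp))ᵀ *ᵥ x) ∨
          Λ (p + (t : ℂ) • δp) = Λ p)} ⊆
      insert (0 : ℝ) {t : ℝ | F.eval (t : ℂ) = 0} := by
    rintro t ⟨htR, hcase⟩
    have hqtR : q (t : ℂ) ∈ R := htR
    rcases hcase with hni | hΛ
    · -- non-injective case: the chosen minor vanishes
      right
      have hdet0 : (Msub (t : ℂ)).det = 0 := by
        by_contra hdet
        apply hni
        intro x y hxy
        have hsub : (Wmat S b (p + (t : ℂ) • δp) (p + (t : ℂ) • δp))ᵀ *ᵥ (x - y) = 0 := by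
          rw [Matrix.mulVec_sub, sub_eq_zero]; exact hxy
        have hxy0 : x - y = 0 := by
          apply Matrix.eq_zero_of_vecMul_eq_zero hdet
          funext l
          have := congrFun hsub (s l)
          simpa [Matrix.vecMul, dotProduct, Matrix.mulVec, Matrix.transpose_apply,
            Msub, hq, mul_comm] using this
        exact sub_eq_zero.mp hxy0
      show F.eval (t : ℂ) = 0
      rw [hFdef, Polynomial.eval_mul, hF₁ (t : ℂ) hqtR, hdet0, zero_mul, zero_mul]
    · -- Λ equality case
      rcases eq_or_ne (t : ℝ) 0 with h0 | h0
      · left; exact h0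
      · right
        show F.eval (t : ℂ) = 0
        have ht : (t : ℂ) ≠ 0 := by exact_mod_cast h0
        rw [hFdef, Polynomial.eval_mul, hF₂zero (t : ℂ) ht hqtR hΛ, mul_zero]
  have hroots : {t : ℝ | F.eval (t : ℂ) = 0}.Finite := by
    have hfin : {z : ℂ | F.IsRoot z}.Finite := Polynomial.finite_setOf_isRoot hF
    have heq : {t : ℝ | F.eval (t : ℂ) = 0}
        = (fun t : ℝ => (t : ℂ)) ⁻¹' {z : ℂ | F.IsRoot z} := rfl
    rw [heq]
    exact hfin.preimage Complex.ofReal_injective.injOn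
  exact ((hroots.insert 0).subset hsubset)
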